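/- For all natural numbers x, y and j ≥ 1, the product over ℓ from 1 to j of C(x − (ℓ−1)·y, y) equals C(x, j·y) times the product over ℓ from 1 to j of C((j−ℓ+1)·y, y). -/

import Mathlib

open Finset in
lemma prod_choose_telescope_aux (x y : ℕ) : ∀ j, j * y ≤ x →
    ∏ i ∈ range j, Nat.choose (x - i * y) y =
    Nat.choose x (j * y) * ∏ i ∈ range j, Nat.choose ((j - i) * y) y := by
  intro j
  induction j with
  | zero => simp
  | succ j ih =>
    intro hx
    have hx' : j * y ≤ x := le_trans (Nat.mul_le_mul_right y (Nat.le_succ j)) hx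
    rw [prod_range_succ, ih hx', prod_range_succ' (fun i => Nat.choose ((j + 1 - i) * y) y) j]
    simp only [Nat.sub_zero, Nat.succ_sub_succ]
    have key : Nat.choose x (j * y) * Nat.choose (x - j * y) y =
        Nat.choose x ((j + 1) * y) * Nat.choose ((j + 1) * y) y := by
      have h := Nat.choose_mul (n := x) (k := (j + 1) * y) (s := j * y)
        (Nat.mul_le_mul_right y (Nat.le_succ j))
      have h2 : (j + 1) * y - j * y = y := by
        rw [Nat.add_mul, one_mul, Nat.add_sub_cancel_left]
      rw [h2] at h
      rw [← h]
      congr 1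
      rw [← Nat.choose_symm (Nat.mul_le_mul_right y (Nat.le_succ j)), h2]
    rw [mul_right_comm, key]
    ring

open Finset in
/-- `∏_{ℓ=1}^{j} C(x-(ℓ-1)y, y) = C(x, jy) · ∏_{ℓ=1}^{j} C((j-ℓ+1)y, y)`. -/
theorem prod_choose_telescope (x y j : ℕ) (hj : 1 ≤ j) (hx : j * y ≤ x) :
    ∏ ℓ ∈ Icc 1 j, Nat.choose (x - (ℓ - 1) * y) y =
    Nat.choose x (j * y) * ∏ ℓ ∈ Icc 1 j, Nat.choose ((j - ℓ + 1) * y) y := by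
  have h1 : ∏ ℓ ∈ Icc 1 j, Nat.choose (x - (ℓ - 1) * y) y
      = ∏ i ∈ range j, Nat.choose (x - i * y) y := by
    rw [← Finset.Ico_add_one_right_eq_Icc, Finset.prod_Ico_eq_prod_range]
    simp
  have h2 : ∏ ℓ ∈ Icc 1 j, Nat.choose ((j - ℓ + 1) * y) y
      = ∏ i ∈ range j, Nat.choose ((j - i) * y) y := by
    rw [← Finset.Ico_add_one_right_eq_Icc, Finset.prod_Ico_eq_prod_range]
    apply Finset.prod_congr rfl
    intro i hi
    simp only [Finset.mem_range] at hi
    congr 2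
    omega
  rw [h1, h2, prod_choose_telescope_aux x y j hx]
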